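/- Telescoping error bound for FtP matching: for each round i, dist(P_{i+1}, P_i ∪ {r_{i+1}}) ≤ η_i + d_i + η_{i+1}, where η_j = dist(P_j, OFF_j) is the prediction error at round j, OFF_j is the offline algorithm's server set after j requests, and d_i = dist(OFF_i ∪ {r_{i+1}}, OFF_{i+1}) is the cost OFF pays in round i+1. Summing over all rounds, the total cost of Follow-the-Prediction is at most OFF + 2η, so FtP is (1 + 2η/OFF)-competitive against OFF. -/

import Mathlib

/-- Min-cost perfect matching (earth-mover) distance between two finite
multisets of points of a metric space. -/
noncomputable def mdistM {α : Type*} [MetricSpace α] (s t : Multiset α) : ℝ :=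
  sInf {c | ∃ l₁ l₂ : List α, (l₁ : Multiset α) = s ∧ (l₂ : Multiset α) = t ∧
    c = (List.zipWith dist l₁ l₂).sum}

namespace FtpAux

variable {α : Type*} [MetricSpace α]

def mset (s t : Multiset α) : Set ℝ :=
  {c | ∃ l₁ l₂ : List α, (l₁ : Multiset α) = s ∧ (l₂ : Multiset α) = t ∧
    c = (List.zipWith dist l₁ l₂).sum}

theorem mdistM_eq (s t : Multiset α) : mdistM s t = sInf (mset s t) := rfl

theorem mset_nonempty (s t : Multiset α) : (mset s t).Nonempty :=
  ⟨_, s.toList, t.toList, s.coe_toList, t.coe_toList, rfl⟩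

theorem sum_zipWith_dist_nonneg : ∀ (l₁ l₂ : List α), (0:ℝ) ≤ (List.zipWith dist l₁ l₂).sum := by
  intro l₁
  induction l₁ with
  | nil => intro l₂; simp
  | cons a l ih =>
    intro l₂
    cases l₂ with
    | nil => simp
    | cons b m =>
      simp only [List.zipWith_cons_cons, List.sum_cons]
      have := ih m
      have := dist_nonneg (x := a) (y := b)
      linarith

theorem mset_nonneg (s t : Multiset α) : ∀ c ∈ mset s t, (0:ℝ) ≤ c := by
  rintro c ⟨l₁, l₂, _, _, rfl⟩
  exact sum_zipWith_dist_nonneg l₁ l₂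

theorem mset_bdd (s t : Multiset α) : BddBelow (mset s t) :=
  ⟨0, fun c hc => mset_nonneg s t c hc⟩

theorem mdistM_nonneg (s t : Multiset α) : 0 ≤ mdistM s t :=
  le_csInf (mset_nonempty s t) (mset_nonneg s t)

theorem mset_comm (s t : Multiset α) : mset s t = mset t s := by
  ext c
  constructor <;> rintro ⟨l₁, l₂, h₁, h₂, rfl⟩ <;>
    exact ⟨l₂, l₁, h₂, h₁, by rw [List.zipWith_comm_of_comm dist_comm]⟩

theorem mdistM_comm (s t : Multiset α) : mdistM s t = mdistM t s := by
  rw [mdistM_eq, mdistM_eq, mset_comm]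

theorem realign (l : List α) : ∀ (p : List (α × α)), l.Perm (p.map Prod.fst) →
    ∃ q : List (α × α), q.Perm p ∧ q.map Prod.fst = l := by
  induction l with
  | nil =>
    intro p hp
    have h0 : p.map Prod.fst = [] := (List.Perm.nil_eq hp).symm
    have hp0 : p = [] := by cases p with
      | nil => rfl
      | cons a t => simp at h0
    exact ⟨[], by simp [hp0], rfl⟩
  | cons a l ih =>
    intro p hp
    have ha : a ∈ p.map Prod.fst := hp.mem_iff.mp (List.mem_cons_self)
    obtain ⟨x, hx, hxa⟩ := List.mem_map.mp ha
    obtain ⟨s1, s2, rfl⟩ := List.append_of_mem hx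
    have hperase : (s1 ++ x :: s2).Perm (x :: (s1 ++ s2)) := List.perm_middle
    have h2 : (a :: l).Perm (a :: (s1 ++ s2).map Prod.fst) := by
      refine hp.trans ?_
      have := hperase.map Prod.fst
      simpa [hxa] using this
    obtain ⟨q', hq', hq'f⟩ := ih (s1 ++ s2) h2.cons_inv
    exact ⟨x :: q', (hq'.cons x).trans hperase.symm, by simp [hq'f, hxa]⟩

theorem zip_fst_snd (q : List (α × α)) : (q.map Prod.fst).zip (q.map Prod.snd) = q := by
  induction q with
  | nil => rfl
  | cons x q ih => simp [ih]

theorem zipWith_dist_eq_map_zip (l₁ l₂ : List α) :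
    List.zipWith dist l₁ l₂ = (l₁.zip l₂).map (fun x => dist x.1 x.2) := by
  induction l₁ generalizing l₂ with
  | nil => simp
  | cons a l ih => cases l₂ with
    | nil => simp
    | cons b m => simp [ih]

theorem sum_zipWith_triangle : ∀ (l₁ l₂ l₃ : List α), l₁.length = l₂.length →
    (List.zipWith dist l₁ l₃).sum ≤
      (List.zipWith dist l₁ l₂).sum + (List.zipWith dist l₂ l₃).sum := by
  intro l₁
  induction l₁ with
  | nil =>
    intro l₂ l₃ _
    simp only [List.zipWith_nil_left, List.sum_nil, zero_add]
    exact sum_zipWith_dist_nonneg l₂ l₃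
  | cons a l ih =>
    intro l₂ l₃ hlen
    cases l₂ with
    | nil => simp at hlen
    | cons b m =>
      cases l₃ with
      | nil =>
        simp only [List.zipWith_nil_right, List.sum_nil]
        have h1 := sum_zipWith_dist_nonneg (a :: l) (b :: m)
        linarith
      | cons c k =>
        simp only [List.zipWith_cons_cons, List.sum_cons]
        have := ih m k (by simpa using hlen)
        have htri := dist_triangle a b c
        linarith

theorem coe_length (l : List α) (s : Multiset α) (h : (l : Multiset α) = s) :
    l.length = Multiset.card s := by rw [← h]; simp

theorem mdistM_triangle (s t u : Multiset α)
    (hst : Multiset.card s = Multiset.card t) (htu : Multiset.card t = Multiset.card u) :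
    mdistM s u ≤ mdistM s t + mdistM t u := by
  classical
  have key : ∀ c₁ ∈ mset s t, ∀ c₂ ∈ mset t u, mdistM s u ≤ c₁ + c₂ := by
    rintro c₁ ⟨l₁, l₂, h₁, h₂, rfl⟩ c₂ ⟨l₂', l₃, h₂', h₃, rfl⟩
    have e₁ := coe_length l₁ s h₁
    have e₂ := coe_length l₂ t h₂
    have e₂' := coe_length l₂' t h₂'
    have e₃ := coe_length l₃ u h₃
    have hlen23 : l₂'.length ≤ l₃.length := by omega
    have hfst : (l₂'.zip l₃).map Prod.fst = l₂' := List.map_fst_zip hlen23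
    have hsnd : (l₂'.zip l₃).map Prod.snd = l₃ := List.map_snd_zip (by omega)
    have hperm22 : l₂.Perm l₂' := by
      rw [← Multiset.coe_eq_coe]; rw [h₂, h₂']
    obtain ⟨q, hq, hqf⟩ := realign l₂ (l₂'.zip l₃) (by rw [hfst]; exact hperm22)
    set l₃' := q.map Prod.snd with hl₃'
    have hzip : l₂.zip l₃' = q := by rw [← hqf, hl₃']; exact zip_fst_snd q
    have hcoe₃' : (l₃' : Multiset α) = u := by
      rw [← h₃, Multiset.coe_eq_coe, hl₃', ← hsnd]
      exact hq.map Prod.snd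
    have hsum : (List.zipWith dist l₂ l₃').sum = (List.zipWith dist l₂' l₃).sum := by
      rw [zipWith_dist_eq_map_zip, zipWith_dist_eq_map_zip, hzip]
      exact (hq.map _).sum_eq
    have hmem : (List.zipWith dist l₁ l₃').sum ∈ mset s u := ⟨l₁, l₃', h₁, hcoe₃', rfl⟩
    have hle := csInf_le (mset_bdd s u) hmem
    have htri : (List.zipWith dist l₁ l₃').sum ≤
        (List.zipWith dist l₁ l₂).sum + (List.zipWith dist l₂ l₃').sum :=
      sum_zipWith_triangle l₁ l₂ l₃' (by omega)
    rw [mdistM_eq]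
    rw [hsum] at htri
    linarith
  have h2 : mdistM s u - mdistM s t ≤ sInf (mset t u) := by
    refine le_csInf (mset_nonempty t u) ?_
    intro c₂ hc₂
    have h1 : mdistM s u - c₂ ≤ sInf (mset s t) := by
      refine le_csInf (mset_nonempty s t) ?_
      intro c₁ hc₁
      linarith [key c₁ hc₁ c₂ hc₂]
    rw [← mdistM_eq] at h1
    linarith
  rw [← mdistM_eq] at h2
  linarith

theorem mdistM_add_le (s t : Multiset α) (a : α) :
    mdistM (s + {a}) (t + {a}) ≤ mdistM s t := by
  refine csInf_le_csInf (mset_bdd _ _) (mset_nonempty s t) ?_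
  rintro c ⟨l₁, l₂, h₁, h₂, rfl⟩
  refine ⟨a :: l₁, a :: l₂, ?_, ?_, ?_⟩
  · rw [← h₁, add_comm, Multiset.singleton_add]; exact (Multiset.cons_coe a l₁).symm
  · rw [← h₂, add_comm, Multiset.singleton_add]; exact (Multiset.cons_coe a l₂).symm
  · simp

end FtpAux

open FtpAux in
/-- **Telescoping error bound for FtP matching.** `P i` is the predicted server
set and `OFF i` the offline server set after `i` requests (both of size `i`),
and `r i` is the `(i+1)`-st request. Then for each round `i`,
`dist(P_{i+1}, P_i ∪ {r_{i+1}}) ≤ η_i + d_i + η_{i+1}` where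
`η_j = dist(P_j, OFF_j)` and `d_i = dist(OFF_i ∪ {r_{i+1}}, OFF_{i+1})`; and any
cost `C` bounded by `∑_i dist(P_{i+1}, P_i ∪ {r_{i+1}})` (as is the total cost
of Follow-the-Prediction, by the potential argument with `Φ_1 = Φ_n = 0`)
satisfies `C ≤ OFF + 2η`. -/
theorem ftp_matching_telescope {α : Type*} [MetricSpace α] (n : ℕ)
    (P OFF : ℕ → Finset α) (r : ℕ → α)
    (hP : ∀ i ≤ n, (P i).card = i) (hOFF : ∀ i ≤ n, (OFF i).card = i)
    (C : ℝ)
    (hC : C ≤ ∑ i ∈ Finset.range n, mdistM ((P (i + 1)).val) ((P i).val + {r i})) :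
    (∀ i < n, mdistM ((P (i + 1)).val) ((P i).val + {r i}) ≤
      mdistM ((P i).val) ((OFF i).val) +
        mdistM ((OFF i).val + {r i}) ((OFF (i + 1)).val) +
        mdistM ((P (i + 1)).val) ((OFF (i + 1)).val)) ∧
    C ≤ (∑ i ∈ Finset.range n, mdistM ((OFF i).val + {r i}) ((OFF (i + 1)).val)) +
        2 * ∑ i ∈ Finset.range (n + 1), mdistM ((P i).val) ((OFF i).val) := by
  have part1 : ∀ i < n, mdistM ((P (i + 1)).val) ((P i).val + {r i}) ≤
      mdistM ((P i).val) ((OFF i).val) +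
        mdistM ((OFF i).val + {r i}) ((OFF (i + 1)).val) +
        mdistM ((P (i + 1)).val) ((OFF (i + 1)).val) := by
    intro i hi
    have hi1 : i + 1 ≤ n := hi
    have hin : i ≤ n := le_of_lt hi
    have cP1 : Multiset.card (P (i+1)).val = i + 1 := hP (i+1) hi1
    have cO1 : Multiset.card (OFF (i+1)).val = i + 1 := hOFF (i+1) hi1
    have cP : Multiset.card (P i).val = i := hP i hin
    have cO : Multiset.card (OFF i).val = i := hOFF i hin
    have cPr : Multiset.card ((P i).val + {r i}) = i + 1 := by
      rw [Multiset.card_add, cP]; rfl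
    have cOr : Multiset.card ((OFF i).val + {r i}) = i + 1 := by
      rw [Multiset.card_add, cO]; rfl
    have t1 : mdistM ((P (i+1)).val) ((P i).val + {r i}) ≤
        mdistM ((P (i+1)).val) ((OFF (i+1)).val) +
          mdistM ((OFF (i+1)).val) ((P i).val + {r i}) :=
      mdistM_triangle _ _ _ (by rw [cP1, cO1]) (by rw [cO1, cPr])
    have t2 : mdistM ((OFF (i+1)).val) ((P i).val + {r i}) ≤
        mdistM ((OFF (i+1)).val) ((OFF i).val + {r i}) +
          mdistM ((OFF i).val + {r i}) ((P i).val + {r i}) :=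
      mdistM_triangle _ _ _ (by rw [cO1, cOr]) (by rw [cOr, cPr])
    have t3 : mdistM ((OFF i).val + {r i}) ((P i).val + {r i}) ≤
        mdistM ((OFF i).val) ((P i).val) := mdistM_add_le _ _ _
    have e1 : mdistM ((OFF (i+1)).val) ((OFF i).val + {r i}) =
        mdistM ((OFF i).val + {r i}) ((OFF (i+1)).val) := mdistM_comm _ _
    have e2 : mdistM ((OFF i).val) ((P i).val) =
        mdistM ((P i).val) ((OFF i).val) := mdistM_comm _ _
    linarith
  refine ⟨part1, ?_⟩
  set η : ℕ → ℝ := fun j => mdistM ((P j).val) ((OFF j).val) with hη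
  set d : ℕ → ℝ := fun i => mdistM ((OFF i).val + {r i}) ((OFF (i + 1)).val) with hd
  have hsum : (∑ i ∈ Finset.range n, mdistM ((P (i + 1)).val) ((P i).val + {r i})) ≤
      ∑ i ∈ Finset.range n, (η i + d i + η (i + 1)) := by
    refine Finset.sum_le_sum ?_
    intro i hi
    exact part1 i (Finset.mem_range.mp hi)
  have hsplit : ∑ i ∈ Finset.range n, (η i + d i + η (i + 1)) =
      (∑ i ∈ Finset.range n, η i) + (∑ i ∈ Finset.range n, d i) +
        ∑ i ∈ Finset.range n, η (i + 1) := by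
    rw [← Finset.sum_add_distrib, ← Finset.sum_add_distrib]
  have h1 : (∑ i ∈ Finset.range n, η i) ≤ ∑ i ∈ Finset.range (n + 1), η i := by
    rw [Finset.sum_range_succ]
    have := mdistM_nonneg ((P n).val) ((OFF n).val)
    simp only [hη]
    linarith
  have h2 : (∑ i ∈ Finset.range n, η (i + 1)) ≤ ∑ i ∈ Finset.range (n + 1), η i := by
    rw [Finset.sum_range_succ']
    have := mdistM_nonneg ((P 0).val) ((OFF 0).val)
    simp only [hη]
    linarith
  calc C ≤ _ := hC
    _ ≤ ∑ i ∈ Finset.range n, (η i + d i + η (i + 1)) := hsum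
    _ = _ := hsplit
    _ ≤ (∑ i ∈ Finset.range n, d i) + 2 * ∑ i ∈ Finset.range (n + 1), η i := by linarith
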